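/- Let E be a parameter set, {(X_s, τ_s, E)}_{s ∈ S} a family of (pairwise disjoint) soft topological spaces, and (Y, τ', E) a soft topological space. For each s let C_s = C(X_s, Y) be the set of soft continuous maps X_s → Y, and let C = C(Σ s, X_s, Y) be the set of soft continuous maps from the soft topological sum to Y. Define ∇ : (Π s, C_s) → C by ∇(F) = (fun ⟨s, x⟩ => F s x) (this is well defined: ∇(F) is soft continuous for the sum soft topology). Then the soft mapping (∇, 1_E), i.e. the map (e, F) ↦ (e, ∇ F) : E × (Π s, C_s) → E × C, is a homeomorphism, where E × (Π s, C_s) carries the product soft topology of the pointwise soft topologies on the E × C_s, and E × C carries the pointwise soft topology. -/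

import Mathlib

/-- The product soft topology on `E × (Π s, X s)`: the initial topology with respect to
the projection soft maps `(e, x) ↦ (e, x s)`. -/
def softProdTop {E S : Type*} {X : S → Type*}
    (τ : ∀ s, TopologicalSpace (E × X s)) : TopologicalSpace (E × ∀ s, X s) :=
  ⨅ s, TopologicalSpace.induced (fun p : E × ∀ s, X s => (p.1, p.2 s)) (τ s)

/-- The sum soft topology on `E × (Σ s, X s)`: the final topology with respect to the
inclusion soft maps `(e, x) ↦ (e, ⟨s, x⟩)`. -/
def softSumTop {E S : Type*} {X : S → Type*}
    (τ : ∀ s, TopologicalSpace (E × X s)) : TopologicalSpace (E × Σ s, X s) :=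
  ⨆ s, TopologicalSpace.coinduced (fun p : E × X s => (p.1, ⟨s, p.2⟩)) (τ s)

/-- The set of soft continuous maps from `(X, τ, E)` to `(Y, τ', E)`. -/
def SoftCont {E X Y : Type*} (τ : TopologicalSpace (E × X)) (τ' : TopologicalSpace (E × Y)) :=
  {f : X → Y // @Continuous _ _ τ τ' (Prod.map id f)}

/-- The pointwise soft topology on `E × C(X,Y)`. -/
def pointwiseSoftTop {E X Y : Type*} (τ : TopologicalSpace (E × X))
    (τ' : TopologicalSpace (E × Y)) : TopologicalSpace (E × SoftCont τ τ') :=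
  ⨅ x : X, TopologicalSpace.induced (fun p : E × SoftCont τ τ' => (p.1, p.2.1 x)) τ'

/-- `∇` is well defined: for a family of soft continuous maps `F s : X s → Y`, the map
`⟨s, x⟩ ↦ F s x` is soft continuous on the soft topological sum. -/
theorem nabla_softCont {E S Y : Type*} {X : S → Type*}
    (τ : ∀ s, TopologicalSpace (E × X s)) (τ' : TopologicalSpace (E × Y))
    (F : ∀ s, SoftCont (τ s) τ') :
    @Continuous _ _ (softSumTop τ) τ'
      (Prod.map id (fun q : Σ s, X s => (F q.1).1 q.2)) := by
  refine continuous_iSup_dom.2 fun s => ?_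
  exact continuous_coinduced_dom.2 (F s).2

/-- `∇ : Π s, C(X s, Y) → C(Σ s, X s, Y)`, `∇(F) = (fun ⟨s, x⟩ => F s x)`, induces a soft
mapping `(∇, 1_E)` which is a homeomorphism, where `E × (Π s, C(X s, Y))` carries the
product soft topology of the pointwise soft topologies and `E × C(Σ s, X s, Y)` carries
the pointwise soft topology. -/
theorem nabla_isHomeomorph {E S Y : Type*} {X : S → Type*}
    (τ : ∀ s, TopologicalSpace (E × X s)) (τ' : TopologicalSpace (E × Y)) :
    @IsHomeomorph (E × ∀ s, SoftCont (τ s) τ') (E × SoftCont (softSumTop τ) τ')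
      (softProdTop (fun s => pointwiseSoftTop (τ s) τ'))
      (pointwiseSoftTop (softSumTop τ) τ')
      (fun p => (p.1, ⟨fun q : Σ s, X s => (p.2 q.1).1 q.2, nabla_softCont τ τ' p.2⟩)) := by
  letI : TopologicalSpace (E × ∀ s, SoftCont (τ s) τ') :=
    softProdTop (fun s => pointwiseSoftTop (τ s) τ')
  letI : TopologicalSpace (E × SoftCont (softSumTop τ) τ') :=
    pointwiseSoftTop (softSumTop τ) τ'
  letI : TopologicalSpace (E × Σ s, X s) := softSumTop τ
  letI : TopologicalSpace (E × Y) := τ'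
  rw [isHomeomorph_iff_isEmbedding_surjective]
  constructor
  · refine ⟨⟨?_⟩, ?_⟩
    · -- inducing: topologies agree
      show softProdTop (fun s => pointwiseSoftTop (τ s) τ') = _
      simp only [softProdTop, pointwiseSoftTop, induced_iInf, induced_compose]
      rw [iInf_sigma]
      rfl
    · intro p q h
      have h1 : p.1 = q.1 := by have := congrArg Prod.fst h; exact this
      have h2 := congrArg Prod.snd h
      refine Prod.ext h1 ?_
      funext s
      apply Subtype.ext
      funext x
      exact congrFun (congrArg Subtype.val h2) ⟨s, x⟩
  · rintro ⟨e, g, hg⟩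
    refine ⟨⟨e, fun s => ⟨fun x => g ⟨s, x⟩, ?_⟩⟩, ?_⟩
    · have hincl : @Continuous _ _ (τ s) (softSumTop τ)
          (fun p : E × X s => (p.1, ⟨s, p.2⟩)) := by
        rw [softSumTop]
        exact continuous_iSup_rng continuous_coinduced_rng
      exact hg.comp hincl
    · refine Prod.ext rfl (Subtype.ext (funext fun q => ?_))
      obtain ⟨s, x⟩ := q
      rfl
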